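/- Let d, m be positive integers. Partition [2dm] into 2m consecutive intervals J₁,...,J_{2m} each of size d. Let π be a non-crossing partition of [2dm] all of whose blocks have even cardinality, and suppose that no two consecutive elements i, i+1 lying in the same interval J_k are in the same block of π (i.e. i ∼_π i+1 only if d divides i). Then π connects only elements of different intervals: for every k and every i ≠ j both in J_k, i and j are not in the same block of π. -/
import Mathlib


open Classical

/-- `i` and `j` lie in the same block of the partition `P`. -/
def SameBlock {N : ℕ} (P : Finpartition (Finset.univ : Finset (Fin N))) (i j : Fin N) : Prop :=
  ∃ b ∈ P.parts, i ∈ b ∧ j ∈ b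

/-- A partition of `[N]` is non-crossing if for `i < j < k < l`, `i ∼ k` and `j ∼ l`
imply `i ∼ j`. -/
def IsNonCrossing {N : ℕ} (P : Finpartition (Finset.univ : Finset (Fin N))) : Prop :=
  ∀ i j k l : Fin N, i < j → j < k → k < l →
    SameBlock P i k → SameBlock P j l → SameBlock P i j

lemma sameBlock_symm {N : ℕ} (P : Finpartition (Finset.univ : Finset (Fin N)))
    {i j : Fin N} (h : SameBlock P i j) : SameBlock P j i := by
  obtain ⟨b, hb, hi, hj⟩ := h
  exact ⟨b, hb, hj, hi⟩

lemma sameBlock_trans {N : ℕ} (P : Finpartition (Finset.univ : Finset (Fin N)))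
    {i j k : Fin N} (h1 : SameBlock P i j) (h2 : SameBlock P j k) : SameBlock P i k := by
  obtain ⟨b, hb, hi, hj⟩ := h1
  obtain ⟨c, hc, hj', hk⟩ := h2
  exact ⟨b, hb, hi, (P.eq_of_mem_parts hc hb hj' hj) ▸ hk⟩

/-- Let `π` be a non-crossing partition of `[2dm]` (indexed here from `0`) with all
blocks of even cardinality.  The interval of the element `i` (0-based) is `J_k` with
`k − 1 = i / d`.  If `π` connects two cyclically consecutive elements only at the ends
of the intervals (`i ∼ i+1` only if `d` divides `i+1`, in 1-based terms `d ∣ i`),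
then no block of `π` contains two distinct elements of a same interval `J_k`. -/
theorem nonCrossing_even_consecutive_intervals (d m : ℕ) (hd : 0 < d) (hm : 0 < m)
    [NeZero (2 * d * m)]
    (π : Finpartition (Finset.univ : Finset (Fin (2 * d * m))))
    (hnc : IsNonCrossing π)
    (heven : ∀ b ∈ π.parts, Even b.card)
    (hcons : ∀ i : Fin (2 * d * m), SameBlock π i (i + 1) → d ∣ ((i : ℕ) + 1)) :
    ∀ i j : Fin (2 * d * m), i ≠ j → (i : ℕ) / d = (j : ℕ) / d → ¬ SameBlock π i j := by
  have hN2 : 2 ≤ 2 * d * m := by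
    calc 2 = 2 * 1 * 1 := by ring
    _ ≤ 2 * d * m := Nat.mul_le_mul (Nat.mul_le_mul_left 2 hd) hm
  suffices H : ∀ n : ℕ, ∀ i j : Fin (2 * d * m), (j : ℕ) - (i : ℕ) ≤ n → i < j →
      (i : ℕ) / d = (j : ℕ) / d → ¬ SameBlock π i j by
    intro i j hij hdiv hsb
    rcases lt_or_gt_of_ne hij with h | h
    · exact H _ i j le_rfl h hdiv hsb
    · exact H _ j i le_rfl h hdiv.symm (sameBlock_symm π hsb)
  intro n
  induction n with
  | zero =>
    intro i j hle hlt _ _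
    rw [Fin.lt_def] at hlt
    omega
  | succ n ih =>
    intro i j hle hlt hdiv hsb
    rw [Fin.lt_def] at hlt
    have hjlt : (j : ℕ) < 2 * d * m := j.isLt
    by_cases hcase : (j : ℕ) = (i : ℕ) + 1
    · -- consecutive case: contradiction with hcons
      have hx : (i + 1 : Fin (2 * d * m)) = j := by
        apply Fin.ext
        have h1m : 1 % (2 * d * m) = 1 := Nat.mod_eq_of_lt (by omega)
        rw [Fin.add_def]
        simp only [Fin.val_one', h1m]
        rw [Nat.mod_eq_of_lt (by omega)]
        omega
      rw [← hx] at hsb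
      have hdvd := hcons i hsb
      have hsucc : ((i : ℕ) + 1) / d = (i : ℕ) / d + 1 := by
        rw [Nat.succ_div, if_pos hdvd]
      rw [hcase] at hdiv
      omega
    · -- j ≥ i + 2
      have hxlt : (i : ℕ) + 1 < 2 * d * m := by omega
      set x : Fin (2 * d * m) := ⟨(i : ℕ) + 1, hxlt⟩ with hxdef
      have hxval : (x : ℕ) = (i : ℕ) + 1 := rfl
      have hdivz : ∀ z : ℕ, (i : ℕ) ≤ z → z ≤ (j : ℕ) → z / d = (i : ℕ) / d := by
        intro z h1 h2
        have h3 : (i : ℕ) / d ≤ z / d := Nat.div_le_div_right h1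
        have h4 : z / d ≤ (j : ℕ) / d := Nat.div_le_div_right h2
        omega
      have key : ∀ z : Fin (2 * d * m), (i : ℕ) < (z : ℕ) → (z : ℕ) < (j : ℕ) →
          SameBlock π i z → False := by
        intro z h1 h2 hsz
        exact ih i z (by omega) (Fin.lt_def.mpr h1)
          ((hdivz (z : ℕ) (by omega) (by omega)).symm) hsz
      obtain ⟨b, hb, hxb⟩ := π.exists_mem (Finset.mem_univ x)
      have hcard : 1 < b.card := by
        have he := heven b hb
        have hpos : 0 < b.card := Finset.card_pos.mpr ⟨x, hxb⟩
        rcases he with ⟨k, hk⟩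
        omega
      obtain ⟨y, hyb, hyx⟩ := Finset.exists_mem_ne hcard x
      have hxy : SameBlock π x y := ⟨b, hb, hxb, hyb⟩
      have hyxval : (y : ℕ) ≠ (x : ℕ) := fun h => hyx (Fin.ext h)
      rcases lt_trichotomy (y : ℕ) (i : ℕ) with hy | hy | hy
      · -- y < i : crossing y < i < x < j
        have h1 : SameBlock π y i :=
          hnc y i x j (Fin.lt_def.mpr hy) (Fin.lt_def.mpr (by omega))
            (Fin.lt_def.mpr (by omega)) (sameBlock_symm π hxy) hsb
        exact key x (by omega) (by omega)
          (sameBlock_trans π (sameBlock_symm π h1) (sameBlock_symm π hxy))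
      · -- y = i
        have : y = i := Fin.ext hy
        subst this
        exact key x (by omega) (by omega) (sameBlock_symm π hxy)
      · rcases lt_trichotomy (y : ℕ) (j : ℕ) with hy2 | hy2 | hy2
        · -- i < y < j, y ≠ x, so x < y : smaller pair inside
          have hxy' : (x : ℕ) < (y : ℕ) := by omega
          exact ih x y (by omega) (Fin.lt_def.mpr hxy')
            (by rw [hdivz (x : ℕ) (by omega) (by omega),
                    hdivz (y : ℕ) (by omega) (by omega)]) hxy
        · -- y = j
          have : y = j := Fin.ext hy2
          subst this
          exact key x (by omega) (by omega)
            (sameBlock_trans π hsb (sameBlock_symm π hxy))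
        · -- y > j : crossing i < x < j < y
          have h1 : SameBlock π i x :=
            hnc i x j y (Fin.lt_def.mpr (by omega)) (Fin.lt_def.mpr (by omega))
              (Fin.lt_def.mpr hy2) hsb hxy
          exact key x (by omega) (by omega) h1
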